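/- arXiv:1709.04746 — 2 statements merged into one kernel-verified Lean document; each statement's English description precedes it below -/
import Mathlib

section
/- Let G be a finite group acting on [m] with an m-switch table s, and let σ := σ_0·σ_1···σ_{m-1} where σ_i = 1 + #{j > i : s(i,j) ≠ id}. Then σ ≤ m!, with equality if and only if the quotient G/G_{[m]} is isomorphic to the full symmetric group Sym(m). Moreover, σ = |G| if the action of G on [m] is faithful. -/
open Classical

/-- The pointwise stabilizer `G_{[i]}` of `{0,...,i-1}` for a group `G` acting on `Fin m`. -/
def pstab (G : Type*) [Group G] (m : ℕ) [MulAction G (Fin m)] (i : ℕ) : Subgroup G where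
  carrier := {g : G | ∀ k : Fin m, (k : ℕ) < i → g • k = k}
  one_mem' := fun k _ => one_smul G k
  mul_mem' := by
    intro a b ha hb k hk
    rw [mul_smul, hb k hk, ha k hk]
  inv_mem' := by
    intro a ha k hk
    conv_lhs => rw [← ha k hk]
    exact inv_smul_smul a k

/-- An `m`-switch table for `G`: `s i j` is an element of `G_{[i]}` mapping `j` to `i`
if one exists, and the identity otherwise; by convention `s i i = 1`. -/
def IsSwitchTable (G : Type*) [Group G] (m : ℕ) [MulAction G (Fin m)]
    (s : Fin m → Fin m → G) : Prop :=
  (∀ i : Fin m, s i i = 1) ∧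
  ∀ i j : Fin m,
    ((∃ g : G, g ∈ pstab G m (i : ℕ) ∧ g • j = i) →
      (s i j ∈ pstab G m (i : ℕ) ∧ s i j • j = i)) ∧
    ((¬ ∃ g : G, g ∈ pstab G m (i : ℕ) ∧ g • j = i) → s i j = 1)

/-- `σ_i = 1 + #{j > i : s i j ≠ 1}`. -/
noncomputable def sigmaRow (G : Type*) [Group G] (m : ℕ) [MulAction G (Fin m)]
    (s : Fin m → Fin m → G) (i : Fin m) : ℕ :=
  1 + (Finset.univ.filter fun j : Fin m => i < j ∧ s i j ≠ 1).card

section Aux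

set_option linter.unusedSectionVars false

variable {G : Type*} [Group G] [Fintype G] {m : ℕ} [MulAction G (Fin m)]
  {s : Fin m → Fin m → G}

lemma mem_pstab {i : ℕ} {g : G} : g ∈ pstab G m i ↔ ∀ k : Fin m, (k : ℕ) < i → g • k = k :=
  Iff.rfl

lemma pstab_zero : pstab G m 0 = ⊤ := by
  ext g; simp [mem_pstab]

lemma pstab_m_eq_ker : pstab G m m = (MulAction.toPermHom G (Fin m)).ker := by
  ext g
  simp only [mem_pstab, MonoidHom.mem_ker]
  constructor
  · intro h
    ext k
    simp only [MulAction.toPermHom_apply, MulAction.toPerm_apply, Equiv.Perm.coe_one, id_eq]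
    exact congrArg Fin.val (h k k.isLt)
  · intro h k _
    simpa using Equiv.Perm.congr_fun h k

lemma mem_orbit_pstab_iff (hs : IsSwitchTable G m s) (i j : Fin m) :
    j ∈ MulAction.orbit (pstab G m (i : ℕ)) i ↔ j = i ∨ (i < j ∧ s i j ≠ 1) := by
  constructor
  · rintro ⟨h, hj⟩
    have hj' : (h : G) • i = j := hj
    by_cases hji : j = i
    · left; exact hji
    right
    have hinv : (h : G)⁻¹ ∈ pstab G m (i : ℕ) := (pstab G m (i : ℕ)).inv_mem h.2
    have hback : (h : G)⁻¹ • j = i := by rw [← hj']; exact inv_smul_smul _ _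
    constructor
    · rw [Fin.lt_def]
      by_contra hle
      push_neg at hle
      rcases lt_or_eq_of_le hle with hlt | heq
      · have := hinv _ hlt
        rw [this] at hback
        exact hji hback
      · exact hji (Fin.ext heq)
    · have hex : ∃ g : G, g ∈ pstab G m (i : ℕ) ∧ g • j = i :=
        ⟨(h : G)⁻¹, hinv, hback⟩
      have hthis := (hs.2 i j).1 hex
      intro h1
      rw [h1, one_smul] at hthis
      exact hji hthis.2
  · rintro (rfl | ⟨hij, hne⟩)
    · exact ⟨1, one_smul _ _⟩
    · have hex : ∃ g : G, g ∈ pstab G m (i : ℕ) ∧ g • j = i := by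
        by_contra hnex
        exact hne ((hs.2 i j).2 hnex)
      obtain ⟨hmem, hmap⟩ := (hs.2 i j).1 hex
      refine ⟨⟨(s i j)⁻¹, (pstab G m (i : ℕ)).inv_mem hmem⟩, ?_⟩
      show (s i j)⁻¹ • i = j
      exact inv_smul_eq_iff.mpr hmap.symm

lemma card_orbit_pstab (hs : IsSwitchTable G m s) (i : Fin m) :
    Fintype.card (MulAction.orbit (pstab G m (i : ℕ)) i) = sigmaRow G m s i := by
  classical
  have hset : (MulAction.orbit (pstab G m (i : ℕ)) i).toFinset =
      insert i (Finset.univ.filter fun j : Fin m => i < j ∧ s i j ≠ 1) := by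
    ext j
    simp only [Set.mem_toFinset, Finset.mem_insert, Finset.mem_filter, Finset.mem_univ, true_and]
    exact mem_orbit_pstab_iff hs i j
  rw [← Set.toFinset_card, hset, Finset.card_insert_of_notMem (by simp), sigmaRow]
  omega

/-- The stabilizer of `i` inside `pstab G m i` is `pstab G m (i+1)`. -/
noncomputable def stabEquiv (i : Fin m) :
    MulAction.stabilizer (pstab G m (i : ℕ)) i ≃ pstab G m ((i : ℕ) + 1) where
  toFun h := ⟨(h : G), by
    intro k hk
    rcases Nat.lt_succ_iff_lt_or_eq.mp hk with hlt | heq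
    · exact (h : pstab G m (i : ℕ)).2 k hlt
    · have hk' : k = i := Fin.ext heq
      subst hk'
      exact h.2⟩
  invFun g := ⟨⟨(g : G), fun k hk => g.2 k (Nat.lt_succ_of_lt hk)⟩, by
    show (g : G) • i = i
    exact g.2 i (Nat.lt_succ_self _)⟩
  left_inv h := by ext; rfl
  right_inv g := by ext; rfl

lemma card_pstab_step (hs : IsSwitchTable G m s) (i : Fin m) :
    Fintype.card (pstab G m (i : ℕ)) =
      sigmaRow G m s i * Fintype.card (pstab G m ((i : ℕ) + 1)) := by
  classical
  have h := MulAction.card_orbit_mul_card_stabilizer_eq_card_group (pstab G m (i : ℕ)) i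
  rw [card_orbit_pstab hs i, Fintype.card_congr (stabEquiv i)] at h
  exact h.symm

lemma prod_sigma_mul (hs : IsSwitchTable G m s) :
    (∏ i : Fin m, sigmaRow G m s i) * Fintype.card (pstab G m m) = Fintype.card G := by
  classical
  set f : ℕ → ℕ := fun n => if h : n < m then sigmaRow G m s ⟨n, h⟩ else 1 with hf
  have hprod : (∏ i : Fin m, sigmaRow G m s i) = ∏ i ∈ Finset.range m, f i := by
    rw [← Fin.prod_univ_eq_prod_range]
    apply Finset.prod_congr rfl
    intro i _
    simp [hf, i.isLt]
  have key : ∀ n, n ≤ m →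
      (∏ i ∈ Finset.range n, f i) * Fintype.card (pstab G m n) = Fintype.card G := by
    intro n
    induction n with
    | zero =>
      intro _
      simp only [Finset.range_zero, Finset.prod_empty, one_mul]
      rw [pstab_zero]
      exact Fintype.card_congr Subgroup.topEquiv.toEquiv
    | succ n ih =>
      intro hn
      have hnm : n < m := hn
      rw [Finset.prod_range_succ]
      have hstep : Fintype.card (pstab G m n) =
          sigmaRow G m s ⟨n, hnm⟩ * Fintype.card (pstab G m (n + 1)) :=
        card_pstab_step hs ⟨n, hnm⟩
      have hfn : f n = sigmaRow G m s ⟨n, hnm⟩ := dif_pos hnm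
      rw [hfn, mul_assoc, ← hstep]
      exact ih (le_of_lt hnm)
  rw [hprod]
  exact key m le_rfl

end Aux

/-- `σ = σ_0 σ_1 ⋯ σ_{m-1}` satisfies `σ ≤ m!`, with equality iff the image of `G` in
`Sym(m)` is everything (i.e. `G/G_{[m]} ≅ Sym(m)`); moreover `σ = |G|` if the action is
faithful. -/
theorem sigma_le_factorial (G : Type*) [Group G] [Fintype G] (m : ℕ)
    [MulAction G (Fin m)] (s : Fin m → Fin m → G) (hs : IsSwitchTable G m s) :
    (∏ i : Fin m, sigmaRow G m s i) ≤ Nat.factorial m ∧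
    ((∏ i : Fin m, sigmaRow G m s i) = Nat.factorial m ↔
      Function.Surjective (MulAction.toPermHom G (Fin m))) ∧
    (Function.Injective (MulAction.toPermHom G (Fin m)) →
      (∏ i : Fin m, sigmaRow G m s i) = Fintype.card G) := by
  classical
  set φ := MulAction.toPermHom G (Fin m) with hφ
  have hmain0 := prod_sigma_mul hs
  have hmain : (∏ i : Fin m, sigmaRow G m s i) * Nat.card (pstab G m m) = Nat.card G := by
    rw [Nat.card_eq_fintype_card, Nat.card_eq_fintype_card]
    exact hmain0
  rw [pstab_m_eq_ker] at hmain
  have hG : Nat.card G = Nat.card (G ⧸ φ.ker) * Nat.card φ.ker :=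
    Subgroup.card_eq_card_quotient_mul_card_subgroup φ.ker
  have hquot : Nat.card (G ⧸ φ.ker) = Nat.card φ.range :=
    Nat.card_congr (QuotientGroup.quotientKerEquivRange φ).toEquiv
  have hkpos : 0 < Nat.card φ.ker := Nat.card_pos
  have hsigma : (∏ i : Fin m, sigmaRow G m s i) = Nat.card φ.range := by
    have h1 : (∏ i : Fin m, sigmaRow G m s i) * Nat.card φ.ker =
        Nat.card φ.range * Nat.card φ.ker := by
      rw [← hquot, ← hG]
      exact hmain
    exact Nat.eq_of_mul_eq_mul_right hkpos h1
  have hperm : Nat.card (Equiv.Perm (Fin m)) = Nat.factorial m := by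
    rw [Nat.card_eq_fintype_card, Fintype.card_perm, Fintype.card_fin]
  refine ⟨?_, ?_, ?_⟩
  · rw [hsigma, ← hperm]
    exact Nat.card_le_card_of_injective _ Subtype.val_injective
  · rw [hsigma, ← hperm, ← MonoidHom.range_eq_top]
    constructor
    · intro h
      exact Subgroup.eq_top_of_card_eq _ h
    · intro h
      rw [h]
      exact Subgroup.card_top
  · intro hinj
    have hk1 : Nat.card φ.ker = 1 := by
      have hb : φ.ker = ⊥ := (MonoidHom.ker_eq_bot_iff φ).mpr hinj
      simp [hb]
    have hq : Nat.card (G ⧸ φ.ker) = Nat.card G := by rw [hG, hk1, mul_one]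
    rw [hsigma, ← hquot, hq, Nat.card_eq_fintype_card]
end

section
/- Let G be a finite group acting on a finite set X with the property that for all i ∈ X and g ∈ G there exists some g' ∈ G with g'(k) = k for all k < i and g'(g^{-1}(i)) = i whenever g ∈ G_{[i]} (this is automatic). Then any g ∈ G can be written as a product of at most m switch-table entries times an element of the kernel, where m = |X|; i.e., the switch-table entries generate G modulo the kernel of the action. -/
open Classical

/-- Every `g ∈ G` is a product of at most `m` switch-table entries times an element of the
kernel `G_{[m]}`; hence the switch-table entries together with the kernel generate `G`. -/
theorem switch_table_generates (G : Type*) [Group G] [Fintype G] (m : ℕ)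
    [MulAction G (Fin m)] (s : Fin m → Fin m → G) (hs : IsSwitchTable G m s) :
    (∀ g : G, ∃ l : List G, l.length ≤ m ∧ (∀ x ∈ l, ∃ i j : Fin m, x = s i j) ∧
        l.prod * g⁻¹ ∈ pstab G m m) ∧
      Subgroup.closure ({x : G | ∃ i j : Fin m, x = s i j} ∪ (pstab G m m : Set G)) = ⊤ := by
  have key : ∀ n : ℕ, ∀ i : ℕ, m ≤ i + n → ∀ g : G, g ∈ pstab G m i →
      ∃ l : List G, l.length ≤ n ∧ (∀ x ∈ l, ∃ a b : Fin m, x = s a b) ∧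
        l.prod * g⁻¹ ∈ pstab G m m := by
    intro n
    induction n with
    | zero =>
      intro i hi g hg
      refine ⟨[], by simp, by simp, ?_⟩
      simp only [List.prod_nil, one_mul]
      exact (pstab G m m).inv_mem (fun k hk => hg k (lt_of_lt_of_le hk (by omega)))
    | succ n ih =>
      intro i hi g hg
      by_cases hmi : m ≤ i
      · refine ⟨[], by simp, by simp, ?_⟩
        simp only [List.prod_nil, one_mul]
        exact (pstab G m m).inv_mem (fun k hk => hg k (lt_of_lt_of_le hk hmi))
      push_neg at hmi
      set iF : Fin m := ⟨i, hmi⟩ with hiF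
      set j : Fin m := g⁻¹ • iF with hj
      have hexists : ∃ g' : G, g' ∈ pstab G m (iF : ℕ) ∧ g' • j = iF :=
        ⟨g, hg, smul_inv_smul g iF⟩
      obtain ⟨hσ1, hσ2⟩ := ((hs.2 iF j).1 hexists)
      set σ := s iF j with hσ
      have hσinv : σ⁻¹ • iF = j := by rw [← hσ2, inv_smul_smul]
      have hmem : g * σ⁻¹ ∈ pstab G m (i + 1) := by
        intro k hk
        rcases Nat.lt_or_ge (k : ℕ) i with h | h
        · rw [mul_smul, (pstab G m i).inv_mem hσ1 k h, hg k h]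
        · have hki : k = iF := by
            apply Fin.ext
            show (k : ℕ) = i
            omega
          rw [hki, mul_smul, hσinv, hj]
          exact smul_inv_smul g iF
      obtain ⟨l, hl1, hl2, hl3⟩ := ih (i + 1) (by omega) (g * σ⁻¹) hmem
      refine ⟨l ++ [σ], by simp; omega, ?_, ?_⟩
      · intro x hx
        rcases List.mem_append.mp hx with h | h
        · exact hl2 x h
        · simp only [List.mem_singleton] at h
          exact ⟨iF, j, h⟩
      · have heq : (l ++ [σ]).prod * g⁻¹ = l.prod * (g * σ⁻¹)⁻¹ := by
          simp [List.prod_append, mul_assoc, mul_inv_rev]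
        rw [heq]; exact hl3
  have key0 : ∀ g : G, ∃ l : List G, l.length ≤ m ∧ (∀ x ∈ l, ∃ a b : Fin m, x = s a b) ∧
      l.prod * g⁻¹ ∈ pstab G m m := fun g =>
    key m 0 (by omega) g (fun k hk => absurd hk (Nat.not_lt_zero _))
  refine ⟨key0, ?_⟩
  rw [eq_top_iff]
  intro g _
  obtain ⟨l, _, h2, h3⟩ := key0 g
  have hgeq : g = (l.prod * g⁻¹)⁻¹ * l.prod := by group
  rw [hgeq]
  exact mul_mem (inv_mem (Subgroup.subset_closure (Or.inr h3)))
    (list_prod_mem (fun x hx => Subgroup.subset_closure (Or.inl (h2 x hx))))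
end
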